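/- Let k be even and let G be a k-uniform hypergraph on {1,…,n}. A vector x with x_i ∈ {−1, 1} for all i satisfies ((D−A) x^{k−1})_i = 0 for all i if and only if every edge e ∈ E contains an even number of vertices j with x_j = −1 (equivalently, ∏_{j∈e} x_j = 1 for every edge e). -/
import Mathlib


open Finset

/-- Degree of vertex `i` in the hypergraph with edge set `E`. -/
def hdeg {n : ℕ} (E : Finset (Finset (Fin n))) (i : Fin n) : ℕ :=
  (E.filter fun e => i ∈ e).card

/-- Laplacian tensor action `((D - A) x^{k-1})_i` over ℂ. -/
noncomputable def lapC (k : ℕ) {n : ℕ} (E : Finset (Finset (Fin n)))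
    (x : Fin n → ℂ) (i : Fin n) : ℂ :=
  (hdeg E i : ℂ) * x i ^ (k - 1) -
    ∑ e ∈ E.filter (fun e => i ∈ e), ∏ j ∈ e.erase i, x j

/-- Signless Laplacian tensor action `((D + A) x^{k-1})_i` over ℂ. -/
noncomputable def slapC (k : ℕ) {n : ℕ} (E : Finset (Finset (Fin n)))
    (x : Fin n → ℂ) (i : Fin n) : ℂ :=
  (hdeg E i : ℂ) * x i ^ (k - 1) +
    ∑ e ∈ E.filter (fun e => i ∈ e), ∏ j ∈ e.erase i, x j

/-- Laplacian tensor action `((D - A) x^{k-1})_i` over ℝ. -/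
noncomputable def lapR (k : ℕ) {n : ℕ} (E : Finset (Finset (Fin n)))
    (x : Fin n → ℝ) (i : Fin n) : ℝ :=
  (hdeg E i : ℝ) * x i ^ (k - 1) -
    ∑ e ∈ E.filter (fun e => i ∈ e), ∏ j ∈ e.erase i, x j

/-- Signless Laplacian tensor action `((D + A) x^{k-1})_i` over ℝ. -/
noncomputable def slapR (k : ℕ) {n : ℕ} (E : Finset (Finset (Fin n)))
    (x : Fin n → ℝ) (i : Fin n) : ℝ :=
  (hdeg E i : ℝ) * x i ^ (k - 1) +
    ∑ e ∈ E.filter (fun e => i ∈ e), ∏ j ∈ e.erase i, x j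

/-- The hypergraph with edge set `E` is connected: every pair of distinct vertices is
joined by a chain of edges with consecutive edges intersecting. -/
def HConnected {n : ℕ} (E : Finset (Finset (Fin n))) : Prop :=
  ∀ i j : Fin n, i ≠ j → ∃ m : ℕ, ∃ es : Fin (m + 1) → Finset (Fin n),
    (∀ r, es r ∈ E) ∧ i ∈ es 0 ∧ j ∈ es (Fin.last m) ∧
    ∀ r : Fin m, (es r.castSucc ∩ es r.succ).Nonempty

theorem stmt_10 {n k : ℕ} (hk : 3 ≤ k) (hn : k ≤ n) (hkeven : Even k)
    (E : Finset (Finset (Fin n))) (hE : ∀ e ∈ E, e.card = k)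
    (x : Fin n → ℝ) (hx : ∀ i, x i = 1 ∨ x i = -1) :
    (∀ i, lapR k E x i = 0) ↔
      ∀ e ∈ E, Even (e.filter fun j => x j = -1).card := by
  have hsq : ∀ i, x i * x i = 1 := by
    intro i; rcases hx i with h | h <;> rw [h] <;> norm_num
  have hkodd : Odd (k - 1) := by
    rcases hkeven with ⟨m, hm⟩
    refine ⟨m - 1, ?_⟩; omega
  have hpow : ∀ i, x i ^ (k - 1) = x i := by
    intro i; rcases hx i with h | h <;> rw [h]
    · exact one_pow _
    · exact hkodd.neg_one_pow
  -- product over an edge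
  have hprod : ∀ e : Finset (Fin n),
      ∏ j ∈ e, x j = (-1 : ℝ) ^ (e.filter fun j => x j = -1).card := by
    intro e
    rw [← Finset.prod_filter_mul_prod_filter_not e (fun j => x j = -1)]
    have h1 : ∏ j ∈ e.filter (fun j => x j = -1), x j
        = (-1 : ℝ) ^ (e.filter fun j => x j = -1).card := by
      rw [← Finset.prod_const]
      exact Finset.prod_congr rfl fun j hj => (Finset.mem_filter.mp hj).2
    have h2 : ∏ j ∈ e.filter (fun j => ¬ x j = -1), x j = 1 := by
      apply Finset.prod_eq_one
      intro j hj
      rcases hx j with h | h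
      · exact h
      · exact absurd h (Finset.mem_filter.mp hj).2
    rw [h1, h2, mul_one]
  have hprodpm : ∀ e : Finset (Fin n), ∏ j ∈ e, x j = 1 ∨ ∏ j ∈ e, x j = -1 := by
    intro e
    rw [hprod]
    rcases Nat.even_or_odd (e.filter fun j => x j = -1).card with h | h
    · left; exact h.neg_one_pow
    · right; exact h.neg_one_pow
  have hprod_iff : ∀ e : Finset (Fin n),
      (∏ j ∈ e, x j = 1 ↔ Even (e.filter fun j => x j = -1).card) := by
    intro e
    rw [hprod]
    exact neg_one_pow_eq_one_iff_even (by norm_num : (-1 : ℝ) ≠ 1)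
  -- key rewriting of x i * lapR
  have hkey : ∀ i, x i * lapR k E x i
      = ∑ e ∈ E.filter (fun e => i ∈ e), (1 - ∏ j ∈ e, x j) := by
    intro i
    unfold lapR hdeg
    rw [hpow, mul_sub, Finset.mul_sum, Finset.sum_sub_distrib]
    congr 1
    · rw [Finset.sum_const, nsmul_eq_mul, mul_one, mul_left_comm, hsq, mul_one]
    · exact Finset.sum_congr rfl fun e he =>
        Finset.mul_prod_erase e x (Finset.mem_filter.mp he).2
  have hterm_nonneg : ∀ e : Finset (Fin n), (0 : ℝ) ≤ 1 - ∏ j ∈ e, x j := by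
    intro e; rcases hprodpm e with h | h <;> rw [h] <;> norm_num
  constructor
  · intro h0 e heE
    have hepos : e.Nonempty := by
      rw [← Finset.card_pos, hE e heE]; omega
    obtain ⟨i, hi⟩ := hepos
    have hz : ∑ e ∈ E.filter (fun e => i ∈ e), (1 - ∏ j ∈ e, x j) = 0 := by
      rw [← hkey, h0 i, mul_zero]
    have := (Finset.sum_eq_zero_iff_of_nonneg
      (fun e _ => hterm_nonneg e)).mp hz e (Finset.mem_filter.mpr ⟨heE, hi⟩)
    rw [← hprod_iff]
    linarith
  · intro hev i
    have hz : ∑ e ∈ E.filter (fun e => i ∈ e), (1 - ∏ j ∈ e, x j) = 0 := by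
      apply Finset.sum_eq_zero
      intro e he
      have := (hprod_iff e).mpr (hev e (Finset.mem_filter.mp he).1)
      rw [this]; ring
    have h := hkey i
    rw [hz] at h
    have := hsq i
    rcases hx i with h1 | h1 <;> rw [h1] at h <;> linarith
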